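/- Let Φ be a finite root system, let S ⊂ Φ be a strongly orthogonal subset with height(e_S) ≤ 3 (i.e., Σ_{β∈S} |⟨η, β^∨⟩| ≤ 3 for all η ∈ Φ), and let R ⊂ Φ be an orthogonal subset such that σ_R̂ = σ_Ŝ in the affine Weyl group, where T̂ = {β − δ : β ∈ T}. Then R = S. -/

import Mathlib

open scoped Classical RealInnerProductSpace

/-- The pairing `⟨γ, α^∨⟩ = 2(γ,α)/(α,α)`. -/
noncomputable def pairing {V : Type*} [NormedAddCommGroup V] [InnerProductSpace ℝ V]
    (γ α : V) : ℝ :=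
  2 * ⟪γ, α⟫ / ⟪α, α⟫

/-- A finite (crystallographic, reduced) root system in a Euclidean space. -/
structure IsRootSystem {V : Type*} [NormedAddCommGroup V] [InnerProductSpace ℝ V]
    (Φ : Set V) : Prop where
  finite : Φ.Finite
  ne_zero : ∀ α ∈ Φ, α ≠ 0
  neg_mem : ∀ α ∈ Φ, -α ∈ Φ
  reflect_mem : ∀ α ∈ Φ, ∀ β ∈ Φ, β - pairing β α • α ∈ Φ
  crystal : ∀ α ∈ Φ, ∀ β ∈ Φ, ∃ n : ℤ, pairing β α = n
  reduced : ∀ α ∈ Φ, ∀ t : ℝ, t • α ∈ Φ → t = 1 ∨ t = -1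

/-- Irreducibility of a root system: no nontrivial orthogonal decomposition. -/
def IsIrreducibleRS {V : Type*} [NormedAddCommGroup V] [InnerProductSpace ℝ V]
    (Φ : Set V) : Prop :=
  ∀ Φ₁ Φ₂ : Set V, Φ = Φ₁ ∪ Φ₂ → (∀ α ∈ Φ₁, ∀ β ∈ Φ₂, ⟪α, β⟫ = 0) → Φ₁ = ∅ ∨ Φ₂ = ∅

/-- A set of roots is strongly orthogonal if for any two distinct elements neither the sum
nor the difference is a root. -/
def StronglyOrthogonal {V : Type*} [NormedAddCommGroup V] [InnerProductSpace ℝ V]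
    (Φ : Set V) (S : Set V) : Prop :=
  ∀ α ∈ S, ∀ β ∈ S, α ≠ β → α + β ∉ Φ ∧ α - β ∉ Φ

/-- A set of pairwise orthogonal vectors. -/
def OrthogonalSet {V : Type*} [NormedAddCommGroup V] [InnerProductSpace ℝ V]
    (S : Set V) : Prop :=
  ∀ α ∈ S, ∀ β ∈ S, α ≠ β → ⟪α, β⟫ = 0

/-- A base (set of simple roots) of a root system. -/
structure IsBase {V : Type*} [NormedAddCommGroup V] [InnerProductSpace ℝ V]
    (Φ : Set V) (Δ : Finset V) : Prop where
  subset : ↑Δ ⊆ Φ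
  indep : LinearIndependent ℝ (fun b : Δ => (b : V))
  pos_or_neg : ∀ α ∈ Φ, (∃ c : V → ℕ, α = ∑ b ∈ Δ, (c b : ℝ) • b) ∨
    (∃ c : V → ℕ, -α = ∑ b ∈ Δ, (c b : ℝ) • b)

/-- The positive roots with respect to a base. -/
def PosRoots {V : Type*} [NormedAddCommGroup V] [InnerProductSpace ℝ V]
    (Φ : Set V) (Δ : Finset V) : Set V :=
  {α | α ∈ Φ ∧ ∃ c : V → ℕ, α = ∑ b ∈ Δ, (c b : ℝ) • b}

/-- `θ` is the highest root of `Φ` with respect to the base `Δ`. -/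
def IsHighestRoot {V : Type*} [NormedAddCommGroup V] [InnerProductSpace ℝ V]
    (Φ : Set V) (Δ : Finset V) (θ : V) : Prop :=
  θ ∈ Φ ∧ ∀ α ∈ Φ, ∃ c : V → ℕ, θ - α = ∑ b ∈ Δ, (c b : ℝ) • b

/-- The coroot of the real affine root `(β, n) = β + nδ`, as a linear functional on the affine
root space `V × ℝδ` (it kills `δ`). -/
noncomputable def acoroot {V : Type*} [NormedAddCommGroup V] [InnerProductSpace ℝ V]
    (β : V) : (V × ℝ) →ₗ[ℝ] ℝ :=
  (2 / ⟪β, β⟫) • ((innerSL ℝ β).toLinearMap ∘ₗ LinearMap.fst ℝ V ℝ)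

/-- The reflection of the affine Weyl group corresponding to the real affine root
`β + nδ`, acting linearly on the affine root space `V ⊕ ℝδ`. -/
noncomputable def sAff {V : Type*} [NormedAddCommGroup V] [InnerProductSpace ℝ V]
    (β : V) (n : ℝ) : Module.End ℝ (V × ℝ) :=
  LinearMap.id - LinearMap.smulRight (acoroot β) ((β, n) : V × ℝ)

/-- The set of reflections of the affine Weyl group of `Φ`. -/
def AffRefls {V : Type*} [NormedAddCommGroup V] [InnerProductSpace ℝ V]
    (Φ : Set V) : Set (Module.End ℝ (V × ℝ)) :=
  {f | ∃ β ∈ Φ, ∃ n : ℤ, f = sAff β (n : ℝ)}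

/-- The positive real affine roots `α + nδ` with `n > 0`, or `n = 0` and `α` positive. -/
def PosAffRoots {V : Type*} [NormedAddCommGroup V] [InnerProductSpace ℝ V]
    (Φ : Set V) (Δ : Finset V) : Set (V × ℝ) :=
  {p | p.1 ∈ Φ ∧ (∃ n : ℤ, p.2 = (n : ℝ)) ∧
    (0 < p.2 ∨ (p.2 = 0 ∧ p.1 ∈ PosRoots Φ Δ))}

/-- Length of an element of the affine Weyl group: the number of positive real affine roots
sent to negative ones. -/
noncomputable def affLength {V : Type*} [NormedAddCommGroup V] [InnerProductSpace ℝ V]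
    (Φ : Set V) (Δ : Finset V) (w : Module.End ℝ (V × ℝ)) : ℕ :=
  {p | p ∈ PosAffRoots Φ Δ ∧ -(w p) ∈ PosAffRoots Φ Δ}.ncard

/-- Bruhat order on the affine Weyl group: `u ≤ w` iff `w` is obtained from `u` by a chain of
right multiplications by reflections, each increasing the length. -/
def bruhatLE {V : Type*} [NormedAddCommGroup V] [InnerProductSpace ℝ V]
    (Φ : Set V) (Δ : Finset V) (u w : Module.End ℝ (V × ℝ)) : Prop :=
  Relation.ReflTransGen
    (fun a b => (∃ t ∈ AffRefls Φ, b = a * t) ∧ affLength Φ Δ a < affLength Φ Δ b) u w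

/-- Strict Bruhat order. -/
def bruhatLT {V : Type*} [NormedAddCommGroup V] [InnerProductSpace ℝ V]
    (Φ : Set V) (Δ : Finset V) (u w : Module.End ℝ (V × ℝ)) : Prop :=
  bruhatLE Φ Δ u w ∧ u ≠ w

/-- The simple affine roots `Δ ∪ {δ - θ}`, as elements of `V × ℝδ`. -/
def SimpleAffRoots {V : Type*} [NormedAddCommGroup V] [InnerProductSpace ℝ V]
    (Δ : Finset V) (θ : V) : Set (V × ℝ) :=
  (fun b => ((b, (0 : ℝ)) : V × ℝ)) '' ↑Δ ∪ {((-θ, (1 : ℝ)) : V × ℝ)}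

/-- The Richardson–Springer monoid operation `s ∘ σ` on involutions. -/
noncomputable def rsCirc {V : Type*} [NormedAddCommGroup V] [InnerProductSpace ℝ V]
    (s σ : Module.End ℝ (V × ℝ)) : Module.End ℝ (V × ℝ) :=
  if s * σ = σ * s then s * σ else s * σ * s

section AuxStmt6

variable {V : Type*} [NormedAddCommGroup V] [InnerProductSpace ℝ V]

lemma pairing_def' (v β : V) : pairing v β = 2 * ⟪v, β⟫ / ⟪β, β⟫ := rfl

lemma sAff_apply' (β : V) (n : ℝ) (x : V × ℝ) :
    sAff β n x = x - ((2 / ⟪β, β⟫) * ⟪β, x.1⟫) • ((β, n) : V × ℝ) := by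
  simp [sAff, acoroot, LinearMap.sub_apply, LinearMap.smulRight_apply, LinearMap.smul_apply,
    LinearMap.comp_apply, smul_eq_mul]

lemma coeff_eq_pairing (v β : V) : (2 / ⟪β, β⟫) * ⟪β, v⟫ = pairing v β := by
  rw [pairing_def', real_inner_comm v β]; ring

lemma pairing_self' {β : V} (h : β ≠ 0) : pairing β β = 2 := by
  have hβ : ⟪β, β⟫ ≠ 0 := inner_self_ne_zero.2 h
  rw [pairing_def']; field_simp

lemma pairing_zero_of_inner {v β : V} (h : ⟪v, β⟫ = 0) : pairing v β = 0 := by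
  rw [pairing_def', h]; simp

lemma inner_zero_of_pairing {v β : V} (h : pairing v β = 0) (hβ : β ≠ 0) : ⟪v, β⟫ = 0 := by
  have hb : ⟪β, β⟫ ≠ 0 := inner_self_ne_zero.2 hβ
  rw [pairing_def', div_eq_zero_iff] at h
  rcases h with h | h
  · linarith
  · exact absurd h hb

/-- Evaluation of the product of commuting affine reflections attached to a pairwise
orthogonal set of roots. -/
lemma noncommProd_sAff_apply (T : Finset V)
    (horth : ∀ a ∈ T, ∀ b ∈ T, a ≠ b → ⟪a, b⟫ = 0)
    (hc : (↑T : Set V).Pairwise fun a b => Commute (sAff a (-1)) (sAff b (-1)))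
    (v : V) (c : ℝ) :
    T.noncommProd (fun β => sAff β (-1)) hc (v, c)
      = (v - ∑ β ∈ T, pairing v β • β, c + ∑ β ∈ T, pairing v β) := by
  induction T using Finset.cons_induction with
  | empty => simp
  | cons a s ha ih =>
    have horth' : ∀ x ∈ s, ∀ y ∈ s, x ≠ y → ⟪x, y⟫ = 0 := fun x hx y hy hxy =>
      horth x (Finset.mem_cons_of_mem hx) y (Finset.mem_cons_of_mem hy) hxy
    rw [Finset.noncommProd_cons, Module.End.mul_apply,
      ih horth' (hc.mono (by simp [Finset.coe_cons, Set.subset_insert])), sAff_apply']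
    have hinner : ⟪a, v - ∑ β ∈ s, pairing v β • β⟫ = ⟪a, v⟫ := by
      rw [inner_sub_right, inner_sum]
      have hz : ∀ β ∈ s, ⟪a, pairing v β • β⟫ = 0 := by
        intro β hβ
        have hne : a ≠ β := fun h => ha (h ▸ hβ)
        rw [real_inner_smul_right,
          horth a (Finset.mem_cons_self a s) β (Finset.mem_cons_of_mem hβ) hne, mul_zero]
      rw [Finset.sum_eq_zero hz, sub_zero]
    rw [Finset.sum_cons, Finset.sum_cons]
    have hco : (2 / ⟪a, a⟫) * ⟪a, v⟫ = pairing v a := coeff_eq_pairing v a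
    ext
    · show v - ∑ β ∈ s, pairing v β • β - _ • (a, (-1 : ℝ)).1 = v - (pairing v a • a + _)
      simp only [hinner, hco]
      abel
    · show c + ∑ β ∈ s, pairing v β - _ * (-1 : ℝ) = c + (pairing v a + ∑ β ∈ s, pairing v β)
      simp only [hinner, hco]
      ring

lemma inner_eq_zero_of_commute {a b : V} (ha : a ≠ 0) (hb : b ≠ 0) (hab : a ≠ b)
    (h : Commute (sAff a (-1)) (sAff b (-1))) : ⟪a, b⟫ = 0 := by
  have haa : ⟪a, a⟫ ≠ 0 := inner_self_ne_zero.2 ha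
  have hbb : ⟪b, b⟫ ≠ 0 := inner_self_ne_zero.2 hb
  by_contra hiz
  set A : ℝ := (2 / ⟪b, b⟫) * ⟪b, a⟫ with hA
  set B : ℝ := (2 / ⟪a, a⟫) * ⟪a, b⟫ with hB
  have hAne : A ≠ 0 := by
    rw [real_inner_comm] at hiz
    exact mul_ne_zero (div_ne_zero two_ne_zero hbb) hiz
  have h1 := LinearMap.congr_fun h.eq ((a, (0 : ℝ)) : V × ℝ)
  rw [Module.End.mul_apply, Module.End.mul_apply] at h1
  have e1 : sAff b (-1) ((a, (0 : ℝ)) : V × ℝ) = (a - A • b, A) := by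
    rw [sAff_apply']
    ext <;> simp [hA] <;> ring
  have e3 : sAff a (-1) ((a, (0 : ℝ)) : V × ℝ) = (a - (2 : ℝ) • a, 2) := by
    rw [sAff_apply']
    have : (2 / ⟪a, a⟫) * ⟪a, a⟫ = 2 := by field_simp
    ext <;> simp [-inner_self_eq_norm_sq_to_K, this] <;> ring
  have e2 : sAff a (-1) ((a - A • b, A) : V × ℝ) = (a - A • b - (2 - A * B) • a, A + (2 - A * B)) := by
    rw [sAff_apply']
    have hc : (2 / ⟪a, a⟫) * ⟪a, a - A • b⟫ = 2 - A * B := by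
      rw [inner_sub_right, real_inner_smul_right]
      have h2 : (2 / ⟪a, a⟫) * ⟪a, a⟫ = 2 := by field_simp
      rw [mul_sub, h2, hB]
      ring
    ext <;> simp [-inner_self_eq_norm_sq_to_K, hc] <;> ring
  have e4 : sAff b (-1) ((a - (2 : ℝ) • a, 2) : V × ℝ) = (a - (2 : ℝ) • a + A • b, 2 - A) := by
    rw [sAff_apply']
    have hc : (2 / ⟪b, b⟫) * ⟪b, a - (2 : ℝ) • a⟫ = -A := by
      rw [inner_sub_right, real_inner_smul_right, hA]
      ring
    ext <;> simp [-inner_self_eq_norm_sq_to_K, hc] <;> ring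
  rw [e1, e2, e3, e4] at h1
  have hsnd : A + (2 - A * B) = 2 - A := congrArg Prod.snd h1
  have hfst : a - A • b - (2 - A * B) • a = a - (2 : ℝ) • a + A • b := congrArg Prod.fst h1
  have hAB : A * B = 2 * A := by linarith
  rw [hAB] at hfst
  have hkey : (2 * A) • (a - b) = 0 := by
    calc (2 * A) • (a - b)
        = (a - A • b - (2 - 2 * A) • a) - (a - (2 : ℝ) • a + A • b) := by module
      _ = 0 := sub_eq_zero.2 hfst
  rcases smul_eq_zero.1 hkey with h0 | h0
  · exact hAne (by linarith)
  · exact hab (sub_eq_zero.1 h0)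

/-- The key combinatorial dichotomy for integer coefficients. -/
lemma coeff_dichotomy (S : Finset V) (c : V → ℝ) (hint : ∀ β ∈ S, ∃ n : ℤ, c β = n)
    (hsum : ∑ β ∈ S, c β = 2) (habs : ∑ β ∈ S, |c β| ≤ 3) :
    (∃ β ∈ S, c β = 2 ∧ ∀ γ ∈ S, γ ≠ β → c γ = 0) ∨
    ∃ β₁ ∈ S, ∃ β₂ ∈ S, β₁ ≠ β₂ ∧ c β₁ = 1 ∧ c β₂ = 1 ∧
      ∀ γ ∈ S, γ ≠ β₁ → γ ≠ β₂ → c γ = 0 := by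
  classical
  have hnonneg : ∀ β ∈ S, 0 ≤ c β := by
    by_contra hcon
    push_neg at hcon
    obtain ⟨β₀, hβ₀, hneg⟩ := hcon
    obtain ⟨n, hn⟩ := hint β₀ hβ₀
    have hn1 : c β₀ ≤ -1 := by
      rw [hn] at hneg ⊢
      have hlt : n < 0 := by exact_mod_cast hneg
      have hle1 : n ≤ -1 := by omega
      calc ((n : ℝ)) ≤ ((-1 : ℤ) : ℝ) := by exact_mod_cast hle1
        _ = -1 := by norm_num
    have hsplit : c β₀ + ∑ β ∈ S.erase β₀, c β = 2 := by
      rw [Finset.add_sum_erase S c hβ₀]; exact hsum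
    have habs' : |∑ β ∈ S.erase β₀, c β| ≤ ∑ β ∈ S.erase β₀, |c β| :=
      Finset.abs_sum_le_sum_abs _ _
    have hsplit2 : |c β₀| + ∑ β ∈ S.erase β₀, |c β| = ∑ β ∈ S, |c β| :=
      Finset.add_sum_erase S (fun β => |c β|) hβ₀
    have h1 : (1 : ℝ) ≤ |c β₀| := by rw [abs_of_nonpos (le_of_lt hneg)]; linarith
    have h2 : (3 : ℝ) ≤ |∑ β ∈ S.erase β₀, c β| := by
      rw [abs_of_nonneg (by linarith)]; linarith
    linarith
  set P := S.filter (fun β => c β ≠ 0) with hP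
  have hPS : P ⊆ S := Finset.filter_subset _ _
  have hPsum : ∑ β ∈ P, c β = 2 := by
    rw [hP, Finset.sum_filter_ne_zero]; exact hsum
  have hzero : ∀ γ ∈ S, γ ∉ P → c γ = 0 := by
    intro γ hγ hγP
    by_contra h0
    exact hγP (Finset.mem_filter.2 ⟨hγ, h0⟩)
  have hone : ∀ β ∈ P, (1 : ℝ) ≤ c β := by
    intro β hβ
    have hβS := Finset.mem_filter.1 hβ
    obtain ⟨n, hn⟩ := hint β hβS.1
    have h0 := hnonneg β hβS.1
    have hne := hβS.2
    rw [hn] at h0 hne ⊢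
    have hn0 : n ≠ 0 := by exact_mod_cast hne
    have : (0 : ℤ) ≤ n := by exact_mod_cast h0
    have : (1 : ℤ) ≤ n := by omega
    exact_mod_cast this
  have hcard : P.card ≤ 2 := by
    by_contra hcon
    push_neg at hcon
    have hle : (P.card : ℝ) ≤ ∑ β ∈ P, c β := by
      have h := Finset.card_nsmul_le_sum P c 1 hone
      simpa using h
    rw [hPsum] at hle
    have : (3 : ℝ) ≤ (P.card : ℝ) := by exact_mod_cast hcon
    linarith
  obtain h0 | h1 | h2 : P.card = 0 ∨ P.card = 1 ∨ P.card = 2 := by omega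
  · exfalso
    rw [Finset.card_eq_zero] at h0
    rw [h0, Finset.sum_empty] at hPsum
    norm_num at hPsum
  · obtain ⟨β, hβ⟩ := Finset.card_eq_one.1 h1
    left
    refine ⟨β, hPS (hβ ▸ Finset.mem_singleton_self β), ?_, ?_⟩
    · rw [hβ, Finset.sum_singleton] at hPsum; exact hPsum
    · intro γ hγ hγβ
      apply hzero γ hγ
      rw [hβ, Finset.mem_singleton]
      exact hγβ
  · obtain ⟨β₁, β₂, hne, hβ⟩ := Finset.card_eq_two.1 h2
    right
    have hβ₁ : β₁ ∈ P := hβ ▸ Finset.mem_insert_self _ _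
    have hβ₂ : β₂ ∈ P := hβ ▸ Finset.mem_insert_of_mem (Finset.mem_singleton_self β₂)
    have hsum12 : c β₁ + c β₂ = 2 := by
      rw [hβ, Finset.sum_insert (by simp [hne]), Finset.sum_singleton] at hPsum
      exact hPsum
    have h1' := hone β₁ hβ₁
    have h2' := hone β₂ hβ₂
    refine ⟨β₁, hPS hβ₁, β₂, hPS hβ₂, hne, by linarith, by linarith, ?_⟩
    intro γ hγ hγ1 hγ2
    apply hzero γ hγ
    rw [hβ]
    simp [hγ1, hγ2]

end AuxStmt6

/-- if `S ⊆ Φ` is strongly orthogonal with `height(e_S) ≤ 3` and `R ⊆ Φ` is an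
orthogonal subset with `σ_R̂ = σ_Ŝ` in the affine Weyl group (where `T̂ = {β - δ : β ∈ T}`),
then `R = S`. -/
theorem stmt6 {V : Type*} [NormedAddCommGroup V] [InnerProductSpace ℝ V]
    (Φ : Set V) (hΦ : IsRootSystem Φ)
    (S R : Finset V) (hSΦ : ↑S ⊆ Φ) (hRΦ : ↑R ⊆ Φ)
    (hso : StronglyOrthogonal Φ ↑S) (horthR : OrthogonalSet (↑R : Set V))
    (hheight : ∀ η ∈ Φ, ∑ β ∈ S, |pairing η β| ≤ 3)
    (hcS : (↑S : Set V).Pairwise fun a b => Commute (sAff a (-1)) (sAff b (-1)))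
    (hcR : (↑R : Set V).Pairwise fun a b => Commute (sAff a (-1)) (sAff b (-1)))
    (heq : R.noncommProd (fun β => sAff β (-1)) hcR = S.noncommProd (fun β => sAff β (-1)) hcS) :
    R = S := by
  classical
  have hS0 : ∀ β ∈ S, (β : V) ≠ 0 := fun β hβ => hΦ.ne_zero β (hSΦ hβ)
  have hR0 : ∀ β ∈ R, (β : V) ≠ 0 := fun β hβ => hΦ.ne_zero β (hRΦ hβ)
  have hSorth : ∀ a ∈ S, ∀ b ∈ S, a ≠ b → ⟪a, b⟫ = 0 := by
    intro a haS b hbS hab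
    exact inner_eq_zero_of_commute (hS0 a haS) (hS0 b hbS) hab
      (hcS (Finset.mem_coe.2 haS) (Finset.mem_coe.2 hbS) hab)
  have hRorth : ∀ a ∈ R, ∀ b ∈ R, a ≠ b → ⟪a, b⟫ = 0 := fun a ha b hb hab =>
    horthR a (Finset.mem_coe.2 ha) b (Finset.mem_coe.2 hb) hab
  have key : ∀ v : V,
      ((v - ∑ β ∈ R, pairing v β • β, (0 : ℝ) + ∑ β ∈ R, pairing v β) : V × ℝ)
        = (v - ∑ β ∈ S, pairing v β • β, (0 : ℝ) + ∑ β ∈ S, pairing v β) := by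
    intro v
    rw [← noncommProd_sAff_apply R hRorth hcR v 0, ← noncommProd_sAff_apply S hSorth hcS v 0]
    exact LinearMap.congr_fun heq ((v, 0) : V × ℝ)
  have hF : ∀ v : V, ∑ β ∈ R, pairing v β • β = ∑ β ∈ S, pairing v β • β := by
    intro v
    have h := congrArg Prod.fst (key v)
    exact sub_right_injective h
  have hg : ∀ v : V, ∑ β ∈ R, pairing v β = ∑ β ∈ S, pairing v β := by
    intro v
    have h := congrArg Prod.snd (key v)
    simpa using h
  have hdich : ∀ x ∈ R, x ∈ S ∨
      ∃ β₁ ∈ S, ∃ β₂ ∈ S, β₁ ≠ β₂ ∧ pairing x β₁ = 1 ∧ pairing x β₂ = 1 ∧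
        (∀ γ ∈ S, γ ≠ β₁ → γ ≠ β₂ → pairing x γ = 0) ∧ (2 : ℝ) • x = β₁ + β₂ := by
    intro x hx
    have hsumR : ∑ β ∈ R, pairing x β = 2 := by
      rw [Finset.sum_eq_single_of_mem x hx
        (fun b hb hbx => pairing_zero_of_inner (hRorth x hx b hb (Ne.symm hbx)))]
      exact pairing_self' (hR0 x hx)
    have hsumS : ∑ β ∈ S, pairing x β = 2 := by rw [← hg x]; exact hsumR
    have hexpR : ∑ β ∈ R, pairing x β • β = (2 : ℝ) • x := by
      rw [Finset.sum_eq_single_of_mem x hx (fun b hb hbx => by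
        rw [pairing_zero_of_inner (hRorth x hx b hb (Ne.symm hbx)), zero_smul])]
      rw [pairing_self' (hR0 x hx)]
    have hexpS : (2 : ℝ) • x = ∑ β ∈ S, pairing x β • β := by
      rw [← hF x]; exact hexpR.symm
    have habs : ∑ β ∈ S, |pairing x β| ≤ 3 := hheight x (hRΦ hx)
    have hint : ∀ β ∈ S, ∃ n : ℤ, pairing x β = n := fun β hβ =>
      hΦ.crystal β (hSΦ hβ) x (hRΦ hx)
    rcases coeff_dichotomy S (fun β => pairing x β) hint hsumS habs with
      ⟨β₀, hβ₀S, h2, h0⟩ | ⟨β₁, hβ₁, β₂, hβ₂, hne, h1, h1', h0⟩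
    · left
      have hxx : (2 : ℝ) • x = (2 : ℝ) • β₀ := by
        rw [hexpS, Finset.sum_eq_single_of_mem β₀ hβ₀S (fun b hb hbb => by
          rw [h0 b hb hbb, zero_smul]), h2]
      have : x = β₀ := smul_right_injective V two_ne_zero hxx
      rwa [this]
    · right
      refine ⟨β₁, hβ₁, β₂, hβ₂, hne, h1, h1', h0, ?_⟩
      rw [hexpS, Finset.sum_eq_add_of_mem β₁ β₂ hβ₁ hβ₂ hne
        (fun c hc hcc => by rw [h0 c hc hcc.1 hcc.2, zero_smul]), h1, h1', one_smul, one_smul]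
  have hRsubS : ∀ x ∈ R, x ∈ S := by
    intro x hx
    rcases hdich x hx with h | ⟨β₁, hβ₁, β₂, hβ₂, hne, hp1, hp2, hp0, hsum2⟩
    · exact h
    exfalso
    have hn1 : ⟪β₁, β₁⟫ ≠ 0 := inner_self_ne_zero.2 (hS0 β₁ hβ₁)
    have hn2 : ⟪β₂, β₂⟫ ≠ 0 := inner_self_ne_zero.2 (hS0 β₂ hβ₂)
    have hib1 : ⟪x, β₁⟫ = ⟪β₁, β₁⟫ / 2 := by
      rw [pairing_def'] at hp1
      field_simp at hp1
      linarith
    have hib2 : ⟪x, β₂⟫ = ⟪β₂, β₂⟫ / 2 := by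
      rw [pairing_def'] at hp2
      field_simp at hp2
      linarith
    set d : V := (⟪β₁, β₁⟫)⁻¹ • β₁ - (⟪β₂, β₂⟫)⁻¹ • β₂ with hd
    have hd1 : ⟪d, β₁⟫ = 1 := by
      rw [hd, inner_sub_left, real_inner_smul_left, real_inner_smul_left,
        hSorth β₂ hβ₂ β₁ hβ₁ (Ne.symm hne)]
      field_simp
      ring
    have hd2 : ⟪d, β₂⟫ = -1 := by
      rw [hd, inner_sub_left, real_inner_smul_left, real_inner_smul_left,
        hSorth β₁ hβ₁ β₂ hβ₂ hne]
      field_simp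
      ring
    have hdβ : ∀ β ∈ S, β ≠ β₁ → β ≠ β₂ → ⟪d, β⟫ = 0 := by
      intro β hβ hb1 hb2
      rw [hd, inner_sub_left, real_inner_smul_left, real_inner_smul_left,
        hSorth β₁ hβ₁ β hβ (Ne.symm hb1), hSorth β₂ hβ₂ β hβ (Ne.symm hb2)]
      ring
    have hib1' : ⟪β₁, x⟫ = ⟪β₁, β₁⟫ / 2 := by rw [real_inner_comm]; exact hib1
    have hib2' : ⟪β₂, x⟫ = ⟪β₂, β₂⟫ / 2 := by rw [real_inner_comm]; exact hib2
    have hdx : ⟪d, x⟫ = 0 := by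
      rw [hd, inner_sub_left, real_inner_smul_left, real_inner_smul_left, hib1', hib2']
      field_simp
      ring
    have hSd : ∑ β ∈ S, pairing d β • β = (2 : ℝ) • d := by
      rw [Finset.sum_eq_add_of_mem β₁ β₂ hβ₁ hβ₂ hne
        (fun c hc hcc => by
          rw [pairing_zero_of_inner (hdβ c hc hcc.1 hcc.2), zero_smul]),
        pairing_def', pairing_def', hd1, hd2, hd]
      rw [show (2 : ℝ) * 1 / ⟪β₁, β₁⟫ = 2 * (⟪β₁, β₁⟫)⁻¹ by field_simp,
        show (2 : ℝ) * (-1) / ⟪β₂, β₂⟫ = -(2 * (⟪β₂, β₂⟫)⁻¹) by field_simp]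
      module
    have hRd : ∑ γ ∈ R, pairing d γ • γ = (2 : ℝ) • d := by rw [hF d]; exact hSd
    have hdne : (2 : ℝ) • d ≠ 0 := by
      intro h0
      have h1 : ⟪(2 : ℝ) • d, β₁⟫ = 0 := by rw [h0]; simp
      rw [real_inner_smul_left, hd1] at h1
      norm_num at h1
    obtain ⟨γ, hγ, hγne⟩ : ∃ γ ∈ R, pairing d γ • γ ≠ 0 := by
      by_contra hall
      push_neg at hall
      rw [Finset.sum_eq_zero hall] at hRd
      exact hdne hRd.symm
    have hpdγ : pairing d γ ≠ 0 := fun h0 => hγne (by rw [h0, zero_smul])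
    have hidγ : ⟪d, γ⟫ ≠ 0 := fun h0 => hpdγ (pairing_zero_of_inner h0)
    have hγx : γ ≠ x := fun h => hidγ (h ▸ hdx)
    have hxγ : ⟪x, γ⟫ = 0 := hRorth x hx γ hγ (Ne.symm hγx)
    have hsumγ : ⟪β₁, γ⟫ + ⟪β₂, γ⟫ = 0 := by
      have h := congrArg (fun y => ⟪y, γ⟫) hsum2
      simp only [inner_add_left, real_inner_smul_left, hxγ] at h
      linarith
    have hb1γ : ⟪β₁, γ⟫ ≠ 0 := by
      intro h0
      have hb2' : ⟪β₂, γ⟫ = 0 := by linarith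
      apply hidγ
      rw [hd, inner_sub_left, real_inner_smul_left, real_inner_smul_left, h0, hb2']
      ring
    have hb2γ : ⟪β₂, γ⟫ ≠ 0 := by intro h0; apply hb1γ; linarith
    rcases hdich γ hγ with hγS | ⟨β₁', hβ₁', β₂', hβ₂', hne', hp1', hp2', hp0', hsum2'⟩
    · have e1 : γ = β₁ := by
        by_contra hne1
        exact hb1γ (by rw [real_inner_comm]; exact hSorth γ hγS β₁ hβ₁ hne1)
      have e2 : γ = β₂ := by
        by_contra hne2
        exact hb2γ (by rw [real_inner_comm]; exact hSorth γ hγS β₂ hβ₂ hne2)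
      exact hne (e1.symm.trans e2)
    · have m1 : β₁ = β₁' ∨ β₁ = β₂' := by
        by_contra hm
        push_neg at hm
        exact hb1γ (by
          rw [real_inner_comm]
          exact inner_zero_of_pairing (hp0' β₁ hβ₁ hm.1 hm.2) (hS0 β₁ hβ₁))
      have m2 : β₂ = β₁' ∨ β₂ = β₂' := by
        by_contra hm
        push_neg at hm
        exact hb2γ (by
          rw [real_inner_comm]
          exact inner_zero_of_pairing (hp0' β₂ hβ₂ hm.1 hm.2) (hS0 β₂ hβ₂))
      have hsumeq : β₁ + β₂ = β₁' + β₂' := by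
        rcases m1 with h1 | h1 <;> rcases m2 with h2 | h2
        · exact absurd (h1.trans h2.symm) hne
        · rw [h1, h2]
        · rw [h1, h2, add_comm]
        · exact absurd (h1.trans h2.symm) hne
      have hxγ2 : (2 : ℝ) • x = (2 : ℝ) • γ := by rw [hsum2, hsum2', hsumeq]
      exact hγx (smul_right_injective V two_ne_zero hxγ2).symm
  have hSsubR : ∀ β ∈ S, β ∈ R := by
    intro β₀ hβ₀
    by_contra hβ₀R
    have hL : ∑ γ ∈ R, pairing β₀ γ = 0 := Finset.sum_eq_zero (fun γ hγ =>
      pairing_zero_of_inner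
        (hSorth β₀ hβ₀ γ (hRsubS γ hγ) (fun h => hβ₀R (h ▸ hγ))))
    have hRt : ∑ β ∈ S, pairing β₀ β = 2 := by
      rw [Finset.sum_eq_single_of_mem β₀ hβ₀
        (fun b hb hbx => pairing_zero_of_inner (hSorth β₀ hβ₀ b hb (Ne.symm hbx)))]
      exact pairing_self' (hS0 β₀ hβ₀)
    rw [hg β₀, hRt] at hL
    norm_num at hL
  exact Finset.Subset.antisymm (fun x hx => hRsubS x hx) (fun x hx => hSsubR x hx)
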